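/- Let V be a finite set of qubits, a ∈ V, E a finite set of nonempty subsets of V with {a} ∉ E, and Ẽ a finite set of nonempty subsets of V∖{a} with Ẽ ∩ E = ∅. Let H_α = (V, E) and H_β = (V, E ∪ {{a}} ∪ Ẽ). Set E′ = {e ∈ E : a ∉ e} and A^α(a) = {e∖{a} : e ∈ E, a ∈ e}. Then H_a(|H_α⟩ + |H_β⟩) = √2 · ∏_{e′∈E′} C_{e′} · ∏_{e_a∈A^α(a)} ∏_{ẽ∈Ẽ} C_{e_a∪ẽ} · ∏_{ẽ∈Ẽ} C_{ẽ∪{a}} |+⟩^{⊗|V|}; in particular the equally weighted plus superposition of |H_α⟩ and |H_β⟩ is, up to the Hadamard gate on qubit a and normalization, again a hypergraph state. -/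

import Mathlib

noncomputable section

/-- The state space of qubits labeled by `ι`: a vector is the family of its
amplitudes in the computational basis `{|x⟩ : x : ι → Bool}`. -/
abbrev QState (ι : Type) := (ι → Bool) → ℂ

/-- The sign `(−1)^{∏_{i∈e} x_i}` of the generalized controlled-Z gate `C_e`
on the basis vector `|x⟩`. -/
def csign {ι : Type} (e : Finset ι) (x : ι → Bool) : ℂ :=
  if ∀ i ∈ e, x i = true then -1 else 1

/-- The generalized controlled-Z gate `C_e`, the diagonal unitary with
`C_e |x⟩ = (−1)^{∏_{i∈e} x_i} |x⟩`. -/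
def Cgate {ι : Type} (e : Finset ι) (ψ : QState ι) : QState ι :=
  fun x => csign e x * ψ x

/-- The Hadamard gate `H_i` on qubit `i`, acting as the identity on all other
qubits. -/
def Hgate {ι : Type} [DecidableEq ι] (i : ι) (ψ : QState ι) : QState ι :=
  fun x => (((Real.sqrt 2)⁻¹ : ℝ) : ℂ) *
    (ψ (Function.update x i false) +
      (if x i = true then -1 else 1) * ψ (Function.update x i true))

/-- The Pauli-X (bit flip) gate `X_i` on qubit `i`. -/
def Xgate {ι : Type} [DecidableEq ι] (i : ι) (ψ : QState ι) : QState ι :=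
  fun x => ψ (Function.update x i (!(x i)))

/-- The generalized CNOT gate with control set `f` and target `t ∉ f`:
it flips bit `t` of `x` exactly when `∏_{j∈f} x_j = 1`. -/
def CNOTgate {ι : Type} [DecidableEq ι] (f : Finset ι) (t : ι) (ψ : QState ι) : QState ι :=
  fun x => ψ (if ∀ j ∈ f, x j = true then Function.update x t (!(x t)) else x)

/-- `|+⟩^{⊗n}`, the uniform superposition `2^{−n/2} ∑_x |x⟩`. -/
def plusAll (ι : Type) [Fintype ι] : QState ι :=
  fun _ => (((Real.sqrt 2)⁻¹ : ℝ) : ℂ) ^ (Fintype.card ι)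

/-- The computational-basis ket `|s⟩`. -/
def zketS {ι : Type} [Fintype ι] [DecidableEq ι] (s : ι → Bool) : QState ι :=
  fun x => if x = s then 1 else 0

/-- The Pauli-X-basis product ket: qubit `i` is `|+⟩` if `s i = false` and
`|−⟩` if `s i = true`, where `|±⟩ = (|0⟩ ± |1⟩)/√2`. -/
def xketS {ι : Type} [Fintype ι] (s : ι → Bool) : QState ι :=
  fun x => ∏ i, ((((Real.sqrt 2)⁻¹ : ℝ) : ℂ) * (if s i && x i then -1 else 1))

/-- Tensor product of a state of the qubits `κ` with a state of the qubits `ι`. -/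
def tensP {κ ι : Type} (φ : QState κ) (u : QState ι) : QState (κ ⊕ ι) :=
  fun x => φ (fun i => x (Sum.inl i)) * u (fun j => x (Sum.inr j))

/-- The partial inner product `(⟨φ|_κ ⊗ I)`, sending a state of the qubits
`κ ⊕ ι` to a state of the remaining qubits `ι`. -/
def pinner {κ ι : Type} [Fintype κ] [DecidableEq κ] (φ : QState κ) (w : QState (κ ⊕ ι)) :
    QState ι :=
  fun y => ∑ b : κ → Bool, (starRingEnd ℂ) (φ b) * w (Sum.elim b y)

/-- Tensor product of a single-qubit state on qubit `i` with a state of the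
remaining qubits. -/
def tensQ {ι : Type} [DecidableEq ι] (i : ι) (φ : Bool → ℂ) (ψ : QState {j : ι // j ≠ i}) :
    QState ι :=
  fun x => φ (x i) * ψ (fun j => x j.1)

/-- The partial inner product over the single qubit `i`. -/
def pinner1 {ι : Type} [DecidableEq ι] (i : ι) (φ : Bool → ℂ) (w : QState ι) :
    QState {j : ι // j ≠ i} :=
  fun y => ∑ b : Bool, (starRingEnd ℂ) (φ b) * w (fun j => if h : j = i then b else y ⟨j, h⟩)

/-- The hypergraph state `∏_{e∈E} C_e |+⟩^{⊗|V|}` of the hypergraph `(V, E)`. -/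
def hgState {ι : Type} [Fintype ι] (E : Finset (Finset ι)) : QState ι :=
  fun x => (∏ e ∈ E, csign e x) * plusAll ι x

/-- Sequential composition (operator product) of a list of operators. -/
def seqComp {α : Type} (fs : List (α → α)) : α → α := fs.foldr (· ∘ ·) id

section Aux

variable {ι : Type} [DecidableEq ι]

lemma csign_congr (e : Finset ι) {x y : ι → Bool} (h : ∀ i ∈ e, x i = y i) :
    csign e x = csign e y := by
  unfold csign
  congr 1
  apply propext
  constructor
  · intro h' i hi; rw [← h i hi]; exact h' i hi
  · intro h' i hi; rw [h i hi]; exact h' i hi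

lemma csign_update_not_mem (a : ι) (b : Bool) (e : Finset ι) (ha : a ∉ e) (x : ι → Bool) :
    csign e (Function.update x a b) = csign e x :=
  csign_congr e fun i hi => Function.update_of_ne (by rintro rfl; exact ha hi) _ _

lemma csign_update_false (a : ι) (e : Finset ι) (ha : a ∈ e) (x : ι → Bool) :
    csign e (Function.update x a false) = 1 := by
  unfold csign
  rw [if_neg]
  intro h
  have := h a ha
  simp at this

lemma csign_update_true (a : ι) (e : Finset ι) (ha : a ∈ e) (x : ι → Bool) :
    csign e (Function.update x a true) = csign (e.erase a) x := by
  unfold csign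
  congr 1
  apply propext
  constructor
  · intro h i hi
    have hne : i ≠ a := (Finset.mem_erase.mp hi).1
    have := h i (Finset.mem_of_mem_erase hi)
    rwa [Function.update_of_ne hne] at this
  · intro h i hi
    by_cases hia : i = a
    · subst hia; simp
    · rw [Function.update_of_ne hia]
      exact h i (Finset.mem_erase.mpr ⟨hia, hi⟩)

lemma csign_cases (e : Finset ι) (x : ι → Bool) : csign e x = 1 ∨ csign e x = -1 := by
  unfold csign
  split
  · right; rfl
  · left; rfl

lemma prod_csign_cases (S : Finset (Finset ι)) (x : ι → Bool) :
    (∏ e ∈ S, csign e x) = 1 ∨ (∏ e ∈ S, csign e x) = -1 := by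
  classical
  induction S using Finset.induction_on with
  | empty => left; simp
  | @insert e S h ih =>
    rw [Finset.prod_insert h]
    rcases csign_cases e x with h1 | h1 <;> rcases ih with h2 | h2 <;> simp [h1, h2]

lemma prod_csign_union (f : Finset ι) (Et : Finset (Finset ι)) (x : ι → Bool) :
    (∏ et ∈ Et, csign (f ∪ et) x) =
      if ∀ i ∈ f, x i = true then ∏ et ∈ Et, csign et x else 1 := by
  split
  case isTrue h =>
    refine Finset.prod_congr rfl fun et _ => ?_
    unfold csign
    congr 1
    apply propext
    constructor
    · intro h' i hi; exact h' i (Finset.mem_union_right _ hi)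
    · intro h' i hi
      rcases Finset.mem_union.mp hi with hi | hi
      · exact h i hi
      · exact h' i hi
  case isFalse h =>
    refine Finset.prod_eq_one fun et _ => ?_
    unfold csign
    rw [if_neg]
    intro h'
    exact h fun i hi => h' i (Finset.mem_union_left _ hi)

end Aux

/-- Theorem 3, plus outcome.  Let `a ∈ V`, `E` a finite set of
nonempty hyperedges with `{a} ∉ E`, and `Ẽ` a finite set of nonempty hyperedges
avoiding `a` with `Ẽ ∩ E = ∅`.  With `H_α = (V,E)` and `H_β = (V, E ∪ {{a}} ∪ Ẽ)`,
`E′ = {e ∈ E : a ∉ e}` and `A^α(a) = {e∖{a} : e ∈ E, a ∈ e}`, one has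
`H_a(|H_α⟩ + |H_β⟩) = √2 · ∏_{e′∈E′} C_{e′} · ∏_{e_a∈A^α(a)} ∏_{ẽ∈Ẽ} C_{e_a∪ẽ}
  · ∏_{ẽ∈Ẽ} C_{ẽ∪{a}} |+⟩^{⊗|V|}`. -/
theorem hypergraph_X_rule_plus {ι : Type} [Fintype ι] [DecidableEq ι] (a : ι)
    (E Et : Finset (Finset ι))
    (hE : ∀ e ∈ E, e.Nonempty) (haE : ({a} : Finset ι) ∉ E)
    (hEt : ∀ e ∈ Et, e.Nonempty ∧ a ∉ e) (hdisj : Et ∩ E = ∅) :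
    Hgate a (hgState E + hgState (E ∪ {({a} : Finset ι)} ∪ Et)) =
      (Real.sqrt 2 : ℂ) • (fun x =>
        (∏ e ∈ E.filter (fun e => a ∉ e), csign e x) *
        ((∏ ea ∈ (E.filter (fun e => a ∈ e)).image (fun e => e.erase a),
            ∏ et ∈ Et, csign (ea ∪ et) x) *
        ((∏ et ∈ Et, csign (insert a et) x) * plusAll ι x))) := by

  classical
  funext x
  have hdET : Disjoint Et E := Finset.disjoint_iff_inter_eq_empty.mpr hdisj
  have haEt : ({a} : Finset ι) ∉ Et := fun h => (hEt _ h).2 (Finset.mem_singleton_self a)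
  have hd1 : Disjoint E ({({a} : Finset ι)} : Finset (Finset ι)) :=
    Finset.disjoint_singleton_right.mpr haE
  have hd2 : Disjoint (E ∪ {({a} : Finset ι)}) Et := by
    rw [Finset.disjoint_union_left]
    exact ⟨hdET.symm, Finset.disjoint_singleton_left.mpr haEt⟩
  set c : ℂ := plusAll ι x with hc
  set x0 := Function.update x a false with hx0
  set x1 := Function.update x a true with hx1
  set A : ℂ := ∏ e ∈ E.filter (fun e => a ∉ e), csign e x with hA
  set Q : ℂ := ∏ e ∈ E.filter (fun e => a ∈ e), csign (e.erase a) x with hQ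
  have hsplitE : ∀ y : ι → Bool, (∏ e ∈ E, csign e y) =
      (∏ e ∈ E.filter (fun e => a ∈ e), csign e y) *
      ∏ e ∈ E.filter (fun e => a ∉ e), csign e y :=
    fun y => (Finset.prod_filter_mul_prod_filter_not E _ _).symm
  have hE0 : (∏ e ∈ E, csign e x0) = A := by
    rw [hsplitE, Finset.prod_eq_one (fun e he => csign_update_false a e (Finset.mem_filter.mp he).2 x),
      one_mul]
    exact Finset.prod_congr rfl fun e he =>
      csign_update_not_mem a false e (Finset.mem_filter.mp he).2 x
  have hE1 : (∏ e ∈ E, csign e x1) = Q * A := by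
    rw [hsplitE]
    congr 1
    · exact Finset.prod_congr rfl fun e he =>
        csign_update_true a e (Finset.mem_filter.mp he).2 x
    · exact Finset.prod_congr rfl fun e he =>
        csign_update_not_mem a true e (Finset.mem_filter.mp he).2 x
  have hT0 : (∏ et ∈ Et, csign et x0) = ∏ et ∈ Et, csign et x :=
    Finset.prod_congr rfl fun e he => csign_update_not_mem a false e (hEt e he).2 x
  have hT1 : (∏ et ∈ Et, csign et x1) = ∏ et ∈ Et, csign et x :=
    Finset.prod_congr rfl fun e he => csign_update_not_mem a true e (hEt e he).2 x
  have hs0 : csign ({a} : Finset ι) x0 = 1 :=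
    csign_update_false a _ (Finset.mem_singleton_self a) x
  have hs1 : csign ({a} : Finset ι) x1 = -1 := by
    have := csign_update_true a ({a} : Finset ι) (Finset.mem_singleton_self a) x
    rw [this, Finset.erase_singleton]
    unfold csign
    rw [if_pos]
    intro i hi
    exact absurd hi (Finset.notMem_empty i)
  have hplus0 : plusAll ι x0 = c := rfl
  have hplus1 : plusAll ι x1 = c := rfl
  have hβ : ∀ y : ι → Bool, hgState (E ∪ {({a} : Finset ι)} ∪ Et) y =
      ((∏ e ∈ E, csign e y) * csign ({a} : Finset ι) y) * (∏ et ∈ Et, csign et y) *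
        plusAll ι y := by
    intro y
    unfold hgState
    rw [Finset.prod_union hd2, Finset.prod_union hd1, Finset.prod_singleton]
  have h1 : hgState E x0 = A * c := by unfold hgState; rw [hE0, hplus0]
  have h2 : hgState E x1 = Q * A * c := by unfold hgState; rw [hE1, hplus1]
  have h3 : hgState (E ∪ {({a} : Finset ι)} ∪ Et) x0 =
      A * (∏ et ∈ Et, csign et x) * c := by
    rw [hβ, hE0, hs0, hT0, hplus0, mul_one]
  have h4 : hgState (E ∪ {({a} : Finset ι)} ∪ Et) x1 =
      -(Q * A * (∏ et ∈ Et, csign et x) * c) := by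
    rw [hβ, hE1, hs1, hT1, hplus1]; ring
  have hinj : ∀ e₁ ∈ E.filter (fun e => a ∈ e), ∀ e₂ ∈ E.filter (fun e => a ∈ e),
      e₁.erase a = e₂.erase a → e₁ = e₂ := by
    intro e₁ h₁ e₂ h₂ h
    have ha₁ := (Finset.mem_filter.mp h₁).2
    have ha₂ := (Finset.mem_filter.mp h₂).2
    rw [← Finset.insert_erase ha₁, h, Finset.insert_erase ha₂]
  have hBimg : (∏ ea ∈ (E.filter (fun e => a ∈ e)).image (fun e => e.erase a),
        ∏ et ∈ Et, csign (ea ∪ et) x) =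
      ∏ e ∈ E.filter (fun e => a ∈ e), ∏ et ∈ Et, csign (e.erase a ∪ et) x :=
    Finset.prod_image hinj
  have hDu := prod_csign_union ({a} : Finset ι) Et x
  simp only [← Finset.insert_eq] at hDu
  have hsq : (((Real.sqrt 2)⁻¹ : ℝ) : ℂ) * 2 = ((Real.sqrt 2 : ℝ) : ℂ) := by
    have h2 : (Real.sqrt 2 : ℝ) * Real.sqrt 2 = 2 := Real.mul_self_sqrt (by norm_num)
    have hne : (Real.sqrt 2 : ℝ) ≠ 0 := by positivity
    push_cast
    field_simp
    exact_mod_cast (h2.symm.trans (sq _).symm)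
  simp only [Hgate, Pi.add_apply, Pi.smul_apply, smul_eq_mul, h1, h2, h3, h4,
    hBimg, hDu, ← hA, ← hc, ← hx0, ← hx1]
  rcases prod_csign_cases Et x with hT' | hT'
  · have hB1 : (∏ e ∈ E.filter (fun e => a ∈ e),
        ∏ et ∈ Et, csign (e.erase a ∪ et) x) = 1 := by
      refine Finset.prod_eq_one fun e _ => ?_
      rw [prod_csign_union, hT']
      exact ite_self 1
    rw [hT', hB1]
    simp only [ite_self]
    split <;> linear_combination (A * c) * hsq
  · have hB2 : (∏ e ∈ E.filter (fun e => a ∈ e),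
        ∏ et ∈ Et, csign (e.erase a ∪ et) x) = Q := by
      rw [hQ]
      refine Finset.prod_congr rfl fun e _ => ?_
      rw [prod_csign_union, hT']
      rfl
    rw [hT', hB2]
    simp only [Finset.mem_singleton, forall_eq]
    by_cases hxa : x a = true
    · simp only [if_pos hxa]
      linear_combination (-(Q * A * c)) * hsq
    · simp only [if_neg hxa]
      linear_combination (Q * A * c) * hsq
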